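/- arXiv:2506.09681 — 4 statements merged into one kernel-verified Lean document; each statement's English description precedes it below -/
import Mathlib

section
/- Let P be a probability measure on ℝ^D and α, β > 0. Define π_Y(y) = ∫ (2πβ²)^{-D/2} exp(−‖y−αx‖²/(2β²)) dP(x), which is the density of Y = αX + βξ when X ∼ P and ξ ∼ N(0, I_D) are independent. Then π_Y is everywhere positive and differentiable on ℝ^D, and for every y ∈ ℝ^D, ∇ log π_Y(y) = (α/β²)·m(y) − y/β², where m(y) = (∫ x · exp(−‖y−αx‖²/(2β²)) dP(x)) / (∫ exp(−‖y−αx‖²/(2β²)) dP(x)) is the posterior mean of X given Y = y (Tweedie's formula). -/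
open MeasureTheory
open scoped ENNReal

/-- The density of `Y = αX + βξ`, `X ∼ P`, `ξ ∼ N(0, I_D)` independent:
`π_Y(y) = ∫ (2πβ²)^{-D/2} exp(−‖y − αx‖²/(2β²)) dP(x)`. -/
noncomputable def smoothedDensity {D : ℕ} (P : Measure (EuclideanSpace ℝ (Fin D)))
    (α β : ℝ) (y : EuclideanSpace ℝ (Fin D)) : ℝ :=
  ∫ x, (2 * Real.pi * β ^ 2) ^ (-(D : ℝ) / 2) *
    Real.exp (-‖y - α • x‖ ^ 2 / (2 * β ^ 2)) ∂P

/-- The posterior mean of `X` given `Y = y`: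
`m(y) = (∫ x e^{−‖y−αx‖²/(2β²)} dP(x)) / (∫ e^{−‖y−αx‖²/(2β²)} dP(x))`. -/
noncomputable def posteriorMean {D : ℕ} (P : Measure (EuclideanSpace ℝ (Fin D)))
    (α β : ℝ) (y : EuclideanSpace ℝ (Fin D)) : EuclideanSpace ℝ (Fin D) :=
  (∫ x, Real.exp (-‖y - α • x‖ ^ 2 / (2 * β ^ 2)) ∂P)⁻¹ •
    ∫ x, Real.exp (-‖y - α • x‖ ^ 2 / (2 * β ^ 2)) • x ∂P

open InnerProductSpace

section Aux

variable {D : ℕ}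

local notation "H" => EuclideanSpace ℝ (Fin D)

private lemma texp_bound {β : ℝ} (hβ : 0 < β) {t : ℝ} :
    t * Real.exp (-t ^ 2 / (2 * β ^ 2)) ≤ β := by
  have h1 : t ^ 2 / (2 * β ^ 2) + 1 ≤ Real.exp (t ^ 2 / (2 * β ^ 2)) :=
    Real.add_one_le_exp _
  have h2 : Real.exp (-t ^ 2 / (2 * β ^ 2)) = (Real.exp (t ^ 2 / (2 * β ^ 2)))⁻¹ := by
    rw [← Real.exp_neg]; ring_nf
  rw [h2, mul_inv_le_iff₀ (Real.exp_pos _)]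
  have h5 : β * (t ^ 2 / (2 * β ^ 2) + 1) = t ^ 2 / (2 * β) + β := by
    field_simp
  have h6 : t - β ≤ t ^ 2 / (2 * β) := by
    rw [le_div_iff₀ (by positivity : (0:ℝ) < 2 * β)]
    nlinarith [sq_nonneg (t - β)]
  have h7 := mul_le_mul_of_nonneg_left h1 hβ.le
  linarith

private noncomputable def gker (α β : ℝ) (y x : EuclideanSpace ℝ (Fin D)) : ℝ :=
  Real.exp (-‖y - α • x‖ ^ 2 / (2 * β ^ 2))

private noncomputable def Gv (α β : ℝ) (y x : EuclideanSpace ℝ (Fin D)) :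
    EuclideanSpace ℝ (Fin D) :=
  ((β ^ 2)⁻¹ * gker α β y x) • (α • x - y)

private lemma gker_pos (α β : ℝ) (y x : H) : 0 < gker α β y x := Real.exp_pos _

private lemma gker_le_one {α β : ℝ} (y x : H) : gker α β y x ≤ 1 := by
  unfold gker
  rw [Real.exp_le_one_iff]
  apply div_nonpos_of_nonpos_of_nonneg
  · exact neg_nonpos.mpr (by positivity)
  · positivity

private lemma continuous_gker (α β : ℝ) (y : H) : Continuous (fun x : H => gker α β y x) := by
  unfold gker
  exact Real.continuous_exp.comp
    ((((continuous_const.sub (continuous_id.const_smul α)).norm.pow 2).neg).div_const _)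

private lemma continuous_Gv (α β : ℝ) (y : H) : Continuous (fun x : H => Gv α β y x) := by
  unfold Gv
  exact ((continuous_const.mul (continuous_gker α β y)).smul
    ((continuous_id.const_smul α).sub continuous_const))

private lemma norm_Gv_le {α β : ℝ} (hβ : 0 < β) (y x : H) : ‖Gv α β y x‖ ≤ β⁻¹ := by
  have h0 : (0:ℝ) < (β ^ 2)⁻¹ * gker α β y x := mul_pos (by positivity) (gker_pos α β y x)
  rw [Gv, norm_smul, Real.norm_eq_abs, abs_of_pos h0]
  have ht : ‖α • x - y‖ = ‖y - α • x‖ := norm_sub_rev _ _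
  have hb : ‖y - α • x‖ * Real.exp (-‖y - α • x‖ ^ 2 / (2 * β ^ 2)) ≤ β := texp_bound hβ
  calc (β ^ 2)⁻¹ * gker α β y x * ‖α • x - y‖
      = (β ^ 2)⁻¹ * (‖y - α • x‖ * Real.exp (-‖y - α • x‖ ^ 2 / (2 * β ^ 2))) := by
        rw [ht]; unfold gker; ring
    _ ≤ (β ^ 2)⁻¹ * β := by
        exact mul_le_mul_of_nonneg_left hb (by positivity)
    _ = β⁻¹ := by rw [sq]; field_simp

private lemma hasFDerivAt_gker (α : ℝ) (β : ℝ) (x y : H) :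
    HasFDerivAt (fun z => gker α β z x) (toDual ℝ H (Gv α β y x)) y := by
  have h1 : HasFDerivAt (fun z : H => z - α • x) (ContinuousLinearMap.id ℝ H) y :=
    (hasFDerivAt_id y).sub_const _
  have h2 := h1.norm_sq
  have h3 := h2.const_mul (-(2 * β ^ 2)⁻¹)
  have h4 := (Real.hasDerivAt_exp (-(2 * β ^ 2)⁻¹ * ‖y - α • x‖ ^ 2)).comp_hasFDerivAt y h3
  have heq : (fun z : H => gker α β z x)
      = fun z => Real.exp (-(2 * β ^ 2)⁻¹ * ‖z - α • x‖ ^ 2) := by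
    funext z; unfold gker; congr 1; ring
  rw [heq]
  refine h4.congr_fderiv (Eq.symm ?_)
  ext w
  have hg : gker α β y x = Real.exp (-(2 * β ^ 2)⁻¹ * ‖y - α • x‖ ^ 2) := by
    unfold gker; congr 1; ring
  simp only [Gv, hg, toDual_apply_apply, ContinuousLinearMap.smul_apply,
    ContinuousLinearMap.coe_comp', Function.comp_apply, ContinuousLinearMap.coe_id', id_eq,
    innerSL_apply_apply, real_inner_smul_left, inner_sub_left, smul_eq_mul, two_smul,
    ContinuousLinearMap.add_apply]
  ring

variable (P : Measure (EuclideanSpace ℝ (Fin D))) [IsProbabilityMeasure P]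

private lemma integrable_gker {α β : ℝ} (y : H) :
    Integrable (fun x => gker α β y x) P := by
  apply Integrable.mono' (integrable_const (1:ℝ)) (continuous_gker α β y).aestronglyMeasurable
  filter_upwards with x
  rw [Real.norm_eq_abs, abs_of_pos (gker_pos α β y x)]
  exact gker_le_one y x

private lemma integrable_gker_smul {α β : ℝ} (hα : 0 < α) (hβ : 0 < β) (y : H) :
    Integrable (fun x => gker α β y x • x) P := by
  apply Integrable.mono' (integrable_const ((β + ‖y‖) / α))
    (((continuous_gker α β y).smul continuous_id).aestronglyMeasurable)
  filter_upwards with x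
  show ‖gker α β y x • x‖ ≤ _
  rw [norm_smul, Real.norm_eq_abs, abs_of_pos (gker_pos α β y x), le_div_iff₀ hα]
  have hb : ‖y - α • x‖ * Real.exp (-‖y - α • x‖ ^ 2 / (2 * β ^ 2)) ≤ β := texp_bound hβ
  have hg1 : gker α β y x ≤ 1 := gker_le_one y x
  have hg0 : 0 < gker α β y x := gker_pos α β y x
  have h1 : α * ‖x‖ ≤ ‖y - α • x‖ + ‖y‖ := by
    have h2 : ‖α • x‖ = α * ‖x‖ := by rw [norm_smul, Real.norm_eq_abs, abs_of_pos hα]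
    calc α * ‖x‖ = ‖α • x‖ := h2.symm
      _ = ‖(α • x - y) + y‖ := by rw [sub_add_cancel]
      _ ≤ ‖α • x - y‖ + ‖y‖ := norm_add_le _ _
      _ = ‖y - α • x‖ + ‖y‖ := by rw [norm_sub_rev]
  have hb' : gker α β y x * ‖y - α • x‖ ≤ β := by
    rw [mul_comm]; unfold gker; exact hb
  nlinarith [mul_le_mul_of_nonneg_left h1 hg0.le, norm_nonneg y,
    mul_le_mul_of_nonneg_right hg1 (norm_nonneg y)]

private lemma integrable_Gv {α β : ℝ} (hβ : 0 < β) (y : H) :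
    Integrable (fun x => Gv α β y x) P := by
  apply Integrable.mono' (integrable_const (β⁻¹)) (continuous_Gv α β y).aestronglyMeasurable
  filter_upwards with x
  exact norm_Gv_le hβ y x

private lemma integrable_toDual_Gv {α β : ℝ} (hβ : 0 < β) (y : H) :
    Integrable (fun x => toDual ℝ H (Gv α β y x)) P := by
  apply Integrable.mono' (integrable_const (β⁻¹))
    (Continuous.aestronglyMeasurable (show Continuous (fun x : H => toDual ℝ H (Gv α β y x))
      from (toDual ℝ H).continuous.comp (continuous_Gv α β y)))
  filter_upwards with x
  rw [LinearIsometryEquiv.norm_map]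
  exact norm_Gv_le hβ y x

private lemma integral_gker_pos {α β : ℝ} (y : H) :
    0 < ∫ x, gker α β y x ∂P := by
  rw [integral_pos_iff_support_of_nonneg (fun x => (gker_pos α β y x).le) (integrable_gker P y)]
  have : Function.support (fun x => gker α β y x) = Set.univ := by
    ext x; simp [Function.mem_support, (gker_pos α β y x).ne']
  rw [this]
  simp [IsProbabilityMeasure.ne_zero]

private lemma hasGradientAt_integral {α β : ℝ} (hβ : 0 < β) (y : H) :
    HasGradientAt (fun z => ∫ x, gker α β z x ∂P) (∫ x, Gv α β y x ∂P) y := by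
  rw [hasGradientAt_iff_hasFDerivAt]
  have key := hasFDerivAt_integral_of_dominated_of_fderiv_le
    (F := fun z (x : H) => gker α β z x) (F' := fun z x => toDual ℝ H (Gv α β z x))
    (μ := P) (x₀ := y) (bound := fun _ => β⁻¹) (Metric.ball_mem_nhds y one_pos)
    (Filter.Eventually.of_forall fun z => (continuous_gker α β z).aestronglyMeasurable)
    (integrable_gker P y)
    (Continuous.aestronglyMeasurable (show Continuous (fun x : H => toDual ℝ H (Gv α β y x))
      from (toDual ℝ H).continuous.comp (continuous_Gv α β y)))
    (Filter.Eventually.of_forall fun x z _ => by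
      rw [LinearIsometryEquiv.norm_map]; exact norm_Gv_le hβ z x)
    (integrable_const _)
    (Filter.Eventually.of_forall fun x z _ => hasFDerivAt_gker α β x z)
  refine key.congr_fderiv (Eq.symm ?_)
  ext w
  rw [ContinuousLinearMap.integral_apply (integrable_toDual_Gv P hβ y)]
  simp only [toDual_apply_apply]
  rw [real_inner_comm, ← integral_inner (integrable_Gv P hβ y) w]
  exact integral_congr_ae (Filter.Eventually.of_forall fun x => real_inner_comm _ w)

private lemma integral_Gv_eq {α β : ℝ} (hα : 0 < α) (hβ : 0 < β) (y : H) :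
    ∫ x, Gv α β y x ∂P
      = (β ^ 2)⁻¹ • (α • (∫ x, gker α β y x • x ∂P) - (∫ x, gker α β y x ∂P) • y) := by
  have h1 : ∀ x : H, Gv α β y x
      = (β ^ 2)⁻¹ • (α • (gker α β y x • x) - gker α β y x • y) := by
    intro x; unfold Gv; module
  simp_rw [h1]
  rw [integral_smul]
  congr 1
  have hint1 : Integrable (fun a : H => α • (gker α β y a • a)) P :=
    (integrable_gker_smul P hα hβ y).smul α
  have hint2 : Integrable (fun a : H => gker α β y a • y) P :=
    (integrable_gker P y).smul_const y
  rw [integral_sub hint1 hint2, integral_smul, integral_smul_const]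

end Aux

section Main

variable {D : ℕ}

local notation "H" => EuclideanSpace ℝ (Fin D)

/-- **Tweedie's formula.** For any probability measure `P` on `ℝ^D` and `α, β > 0`, the density
`π_Y` of `Y = αX + βξ` is everywhere positive and differentiable, and its log-gradient is
`∇ log π_Y(y) = (α/β²) m(y) − y/β²` where `m(y)` is the posterior mean of `X` given `Y = y`. -/
theorem tweedie_formula {D : ℕ} (P : Measure (EuclideanSpace ℝ (Fin D)))
    [IsProbabilityMeasure P] (α β : ℝ) (hα : 0 < α) (hβ : 0 < β) :
    (∀ y, 0 < smoothedDensity P α β y) ∧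
    Differentiable ℝ (smoothedDensity P α β) ∧
    ∀ y, HasGradientAt (fun z => Real.log (smoothedDensity P α β z))
      ((α / β ^ 2) • posteriorMean P α β y - (1 / β ^ 2) • y) y := by
  have hCpos : 0 < (2 * Real.pi * β ^ 2) ^ (-(D:ℝ)/2) :=
    Real.rpow_pos_of_pos (by positivity) _
  have hsd : smoothedDensity P α β
      = fun y => (2 * Real.pi * β ^ 2) ^ (-(D:ℝ)/2) * ∫ x, gker α β y x ∂P := by
    funext y
    simp only [smoothedDensity, gker]
    rw [integral_const_mul]
  have hpos : ∀ y, 0 < smoothedDensity P α β y := by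
    intro y; rw [hsd]; exact mul_pos hCpos (integral_gker_pos P y)
  have hgrad : ∀ y, HasFDerivAt (smoothedDensity P α β)
      ((2 * Real.pi * β ^ 2) ^ (-(D:ℝ)/2) •
        toDual ℝ (EuclideanSpace ℝ (Fin D)) (∫ x, Gv α β y x ∂P)) y := by
    intro y
    rw [hsd]
    exact ((hasGradientAt_integral P hβ y).hasFDerivAt).const_mul _
  refine ⟨hpos, fun y => (hgrad y).differentiableAt, fun y => ?_⟩
  have hI := integral_gker_pos P (α := α) (β := β) y
  have hlog := (Real.hasDerivAt_log (hpos y).ne').comp_hasFDerivAt y (hgrad y)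
  rw [hasGradientAt_iff_hasFDerivAt]
  have hfun : (fun z => Real.log (smoothedDensity P α β z))
      = Real.log ∘ smoothedDensity P α β := rfl
  rw [hfun]
  refine hlog.congr_fderiv (Eq.symm ?_)
  ext w
  rw [integral_Gv_eq P hα hβ y]
  have hpm : posteriorMean P α β y
      = (∫ x, gker α β y x ∂P)⁻¹ • ∫ x, gker α β y x • x ∂P := rfl
  have hsy : smoothedDensity P α β y
      = (2 * Real.pi * β ^ 2) ^ (-(D:ℝ)/2) * ∫ x, gker α β y x ∂P := by rw [hsd]
  simp only [hpm, hsy, toDual_apply_apply, ContinuousLinearMap.smul_apply, smul_eq_mul,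
    inner_sub_left, real_inner_smul_left]
  field_simp

end Main
end

section
/- Let (A_k)_{k∈ℕ}, (B_k)_{k∈ℕ} and (C_k)_{k∈ℕ} be sequences of real numbers with B_k ≥ 0 and C_k ≥ 0 for every k, and let (x_k)_{k∈ℕ} be a sequence of nonnegative real numbers satisfying, for every k ≥ 0, x_{k+1}² ≤ (e^{A_k} x_k + B_k)² + C_k². Then, setting Ā_k = A_0 + ⋯ + A_k, for every k ≥ 0 one has x_{k+1} ≤ e^{Ā_k} x_0 + Σ_{j=0}^{k} e^{Ā_k − Ā_j} B_j + (Σ_{j=0}^{k} e^{2(Ā_k − Ā_j)} C_j²)^{1/2}. -/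
private lemma sq_le_imp (x y : ℝ) (hx : 0 ≤ x) (hy : 0 ≤ y) (h : x^2 ≤ y^2) : x ≤ y := by
  nlinarith

private lemma key (x u v c : ℝ) (hx : 0 ≤ x) (hu : 0 ≤ u) (hv : 0 ≤ v) (hc : 0 ≤ c)
    (h : x^2 ≤ (u + v)^2 + c) : x ≤ u + Real.sqrt (v^2 + c) := by
  have hvc : (0:ℝ) ≤ v^2 + c := by positivity
  have hw : Real.sqrt (v^2 + c) ^ 2 = v^2 + c := Real.sq_sqrt hvc
  have hw0 : 0 ≤ Real.sqrt (v^2 + c) := Real.sqrt_nonneg _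
  have hvw : v ≤ Real.sqrt (v^2 + c) := by
    calc v = Real.sqrt (v^2) := (Real.sqrt_sq hv).symm
    _ ≤ _ := Real.sqrt_le_sqrt (le_add_of_nonneg_right hc)
  apply sq_le_imp _ _ hx (by positivity)
  nlinarith

/-- Recursion lemma: unfolding the recursive inequality
`x_{k+1}² ≤ (e^{A_k} x_k + B_k)² + C_k²` yields
`x_{k+1} ≤ e^{Ā_k} x_0 + Σ_j e^{Ā_k − Ā_j} B_j + (Σ_j e^{2(Ā_k − Ā_j)} C_j²)^{1/2}`,
where `Ā_k = A_0 + ⋯ + A_k`. -/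
theorem recursion_unfolding (A B C x : ℕ → ℝ)
    (hB : ∀ k, 0 ≤ B k) (hC : ∀ k, 0 ≤ C k) (hx : ∀ k, 0 ≤ x k)
    (hrec : ∀ k, x (k + 1) ^ 2 ≤ (Real.exp (A k) * x k + B k) ^ 2 + C k ^ 2) :
    ∀ k, x (k + 1) ≤
      Real.exp (∑ i ∈ Finset.range (k + 1), A i) * x 0 +
      (∑ j ∈ Finset.range (k + 1),
        Real.exp ((∑ i ∈ Finset.range (k + 1), A i) - ∑ i ∈ Finset.range (j + 1), A i) * B j) +
      Real.sqrt (∑ j ∈ Finset.range (k + 1),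
        Real.exp (2 * ((∑ i ∈ Finset.range (k + 1), A i) - ∑ i ∈ Finset.range (j + 1), A i))
          * C j ^ 2) := by
  intro k
  induction k with
  | zero =>
    have h := key (x 1) (Real.exp (A 0) * x 0 + B 0) 0 (C 0 ^ 2) (hx 1)
      (by have := hx 0; have := hB 0; positivity) le_rfl (by positivity)
      (by simpa using hrec 0)
    simp only [zero_add, Finset.sum_range_one, sub_self, Real.exp_zero, one_mul, mul_zero,
      ne_eq] at h ⊢
    simpa [add_assoc] using h
  | succ k ih =>
    set S := Real.exp (∑ i ∈ Finset.range (k + 1), A i) * x 0 +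
      ∑ j ∈ Finset.range (k + 1),
        Real.exp ((∑ i ∈ Finset.range (k + 1), A i) - ∑ i ∈ Finset.range (j + 1), A i) * B j
      with hS
    set T := ∑ j ∈ Finset.range (k + 1),
        Real.exp (2 * ((∑ i ∈ Finset.range (k + 1), A i) - ∑ i ∈ Finset.range (j + 1), A i))
          * C j ^ 2 with hT
    have hT0 : 0 ≤ T := by
      apply Finset.sum_nonneg; intro j _; have := hC j; positivity
    have hS0 : 0 ≤ S := by
      apply add_nonneg
      · have := hx 0; positivity
      · apply Finset.sum_nonneg; intro j _; have := hB j; positivity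
    have hsT0 : 0 ≤ Real.sqrt T := Real.sqrt_nonneg _
    have hsT : Real.sqrt T ^ 2 = T := Real.sq_sqrt hT0
    have hE : (0:ℝ) < Real.exp (A (k+1)) := Real.exp_pos _
    -- from hrec (k+1) and ih
    have hx1 : x (k+1) ≤ S + Real.sqrt T := ih
    have h2 : x (k+2) ^ 2 ≤
        ((Real.exp (A (k+1)) * S + B (k+1)) + Real.exp (A (k+1)) * Real.sqrt T) ^ 2
          + C (k+1) ^ 2 := by
      have h3 := hrec (k+1)
      have h4 : Real.exp (A (k+1)) * x (k+1) + B (k+1)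
          ≤ (Real.exp (A (k+1)) * S + B (k+1)) + Real.exp (A (k+1)) * Real.sqrt T := by
        nlinarith
      have h5 : 0 ≤ Real.exp (A (k+1)) * x (k+1) + B (k+1) := by
        have := hx (k+1); have := hB (k+1); positivity
      nlinarith
    have h6 := key (x (k+2)) (Real.exp (A (k+1)) * S + B (k+1))
      (Real.exp (A (k+1)) * Real.sqrt T) (C (k+1) ^ 2) (hx (k+2))
      (by have := hB (k+1); positivity) (by positivity) (by positivity) h2
    have hv2 : (Real.exp (A (k+1)) * Real.sqrt T) ^ 2 = Real.exp (2 * A (k+1)) * T := by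
      rw [mul_pow, hsT, ← Real.exp_nat_mul]
      ring_nf
    -- rewrite RHS
    have hsum : Real.exp (A (k+1)) * S + B (k+1) =
        Real.exp (∑ i ∈ Finset.range (k + 2), A i) * x 0 +
        ∑ j ∈ Finset.range (k + 2),
          Real.exp ((∑ i ∈ Finset.range (k + 2), A i) - ∑ i ∈ Finset.range (j + 1), A i) * B j := by
      rw [hS, Finset.sum_range_succ (fun j => Real.exp ((∑ i ∈ Finset.range (k + 2), A i) - ∑ i ∈ Finset.range (j + 1), A i) * B j)]
      rw [Finset.sum_range_succ A (k+1)]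
      simp only [sub_self, Real.exp_zero, one_mul]
      have e1 : Real.exp (A (k+1)) * (Real.exp (∑ i ∈ Finset.range (k + 1), A i) * x 0)
          = Real.exp ((∑ i ∈ Finset.range (k + 1), A i) + A (k+1)) * x 0 := by
        rw [Real.exp_add]; ring
      have e2 : Real.exp (A (k+1)) * (∑ j ∈ Finset.range (k + 1),
            Real.exp ((∑ i ∈ Finset.range (k + 1), A i) - ∑ i ∈ Finset.range (j + 1), A i) * B j)
          = ∑ j ∈ Finset.range (k + 1),
            Real.exp ((∑ i ∈ Finset.range (k + 1), A i) + A (k+1) - ∑ i ∈ Finset.range (j + 1), A i) * B j := by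
        rw [Finset.mul_sum]
        apply Finset.sum_congr rfl
        intro j _
        rw [← mul_assoc, ← Real.exp_add]
        ring_nf
      rw [mul_add, e1, e2]
      ring
    have hsum2 : Real.exp (2 * A (k+1)) * T + C (k+1) ^ 2 =
        ∑ j ∈ Finset.range (k + 2),
          Real.exp (2 * ((∑ i ∈ Finset.range (k + 2), A i) - ∑ i ∈ Finset.range (j + 1), A i))
            * C j ^ 2 := by
      rw [hT, Finset.sum_range_succ (fun j => Real.exp (2 * ((∑ i ∈ Finset.range (k + 2), A i) - ∑ i ∈ Finset.range (j + 1), A i)) * C j ^ 2)]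
      rw [Finset.sum_range_succ A (k+1)]
      simp only [sub_self, mul_zero, Real.exp_zero, one_mul]
      rw [Finset.mul_sum]
      congr 1
      apply Finset.sum_congr rfl
      intro j _
      rw [← mul_assoc, ← Real.exp_add]
      ring_nf
    rw [hv2, hsum, hsum2] at h6
    exact h6
end

section
/- Let T and a ≥ 1 be real numbers with T ≥ (1/2)·log(6a), let t, h, φv be real numbers with 0 ≤ t ≤ T − (1/2)·log(6a), 0 ≤ h ≤ 0.7 and 0 ≤ φv ≤ a, and set α = e^{−(T−t)} and m = 1 + (2α²/(1−α²))·(1 − φv/(1−α²)). Then: (i) α² ≤ 1/(6a); (ii) m ≥ 1 + (2α²/(1−α²))·(1 − a/(1−α²)) ≥ 1/3; and (iii) h·((1+α²)/(1−α²) + m) ≤ 2. -/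
/-- Strength of the deflation in the contracting regime: with `α = e^{−(T−t)}` and
`m = 1 + (2α²/(1−α²))(1 − φv/(1−α²))`, under the stated conditions one has
(i) `α² ≤ 1/(6a)`, (ii) `m ≥ 1 + (2α²/(1−α²))(1 − a/(1−α²)) ≥ 1/3`, and
(iii) `h((1+α²)/(1−α²) + m) ≤ 2`. -/
theorem stepsize_contracting_regime (T a t h φv : ℝ)
    (ha : 1 ≤ a) (hT : (1 / 2) * Real.log (6 * a) ≤ T)
    (ht0 : 0 ≤ t) (ht1 : t ≤ T - (1 / 2) * Real.log (6 * a))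
    (hh0 : 0 ≤ h) (hh1 : h ≤ 0.7) (hφ0 : 0 ≤ φv) (hφa : φv ≤ a) :
    Real.exp (-(T - t)) ^ 2 ≤ 1 / (6 * a) ∧
    (1 + (2 * Real.exp (-(T - t)) ^ 2 / (1 - Real.exp (-(T - t)) ^ 2)) *
        (1 - a / (1 - Real.exp (-(T - t)) ^ 2)) ≤
      1 + (2 * Real.exp (-(T - t)) ^ 2 / (1 - Real.exp (-(T - t)) ^ 2)) *
        (1 - φv / (1 - Real.exp (-(T - t)) ^ 2)) ∧
      (1 : ℝ) / 3 ≤ 1 + (2 * Real.exp (-(T - t)) ^ 2 / (1 - Real.exp (-(T - t)) ^ 2)) *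
        (1 - a / (1 - Real.exp (-(T - t)) ^ 2))) ∧
    h * ((1 + Real.exp (-(T - t)) ^ 2) / (1 - Real.exp (-(T - t)) ^ 2) +
      (1 + (2 * Real.exp (-(T - t)) ^ 2 / (1 - Real.exp (-(T - t)) ^ 2)) *
        (1 - φv / (1 - Real.exp (-(T - t)) ^ 2)))) ≤ 2 := by
  set s : ℝ := Real.exp (-(T - t)) ^ 2 with hs_def
  have h6a : (0:ℝ) < 6 * a := by linarith
  have hs_pos : 0 < s := pow_pos (Real.exp_pos _) 2
  -- (i)
  have hs_le : s ≤ 1 / (6 * a) := by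
    have h1 : s = Real.exp (2 * -(T - t)) := by
      rw [hs_def, ← Real.exp_nat_mul]; norm_num
    have h2 : (1 : ℝ) / (6 * a) = Real.exp (-Real.log (6 * a)) := by
      rw [Real.exp_neg, Real.exp_log h6a, one_div]
    rw [h1, h2]
    exact Real.exp_le_exp.mpr (by linarith)
  have hs6 : s ≤ 1 / 6 := by
    have : (1:ℝ) / (6 * a) ≤ 1 / 6 := by
      apply div_le_div_of_nonneg_left (by norm_num) (by norm_num) (by linarith)
    linarith
  have h1s : (0:ℝ) < 1 - s := by linarith
  have hsa : 6 * a * s ≤ 1 := by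
    have h := (le_div_iff₀ h6a).mp hs_le
    nlinarith [h]
  have hc : 0 ≤ 2 * s / (1 - s) := by positivity
  have hφa' : φv / (1 - s) ≤ a / (1 - s) := by gcongr
  have hmono : 2 * s / (1 - s) * (1 - a / (1 - s))
      ≤ 2 * s / (1 - s) * (1 - φv / (1 - s)) :=
    mul_le_mul_of_nonneg_left (by linarith) hc
  have h13 : (1:ℝ) / 3 ≤ 1 + 2 * s / (1 - s) * (1 - a / (1 - s)) := by
    have hexp : 1 + 2 * s / (1 - s) * (1 - a / (1 - s))
        = ((1 - s) ^ 2 + 2 * s * ((1 - s) - a)) / (1 - s) ^ 2 := by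
      field_simp
    rw [hexp, le_div_iff₀ (by positivity)]
    nlinarith [hsa, hs6, hs_pos.le]
  refine ⟨hs_le, ⟨by linarith, h13⟩, ?_⟩
  -- (iii)
  have hφs : 0 ≤ φv / (1 - s) := by positivity
  have hm : 2 * s / (1 - s) * (1 - φv / (1 - s)) ≤ 2 * s / (1 - s) :=
    mul_le_of_le_one_right (by positivity) (by linarith)
  have hp : 0 ≤ (1 + s) / (1 - s) := by positivity
  have hE : (1 + s) / (1 - s) + (1 + 2 * s / (1 - s) * (1 - φv / (1 - s))) ≤ 14 / 5 := by
    have h2 : (1 + s) / (1 - s) + 2 * s / (1 - s) = (1 + 3 * s) / (1 - s) := by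
      field_simp; ring
    have h3 : (1 + 3 * s) / (1 - s) ≤ 9 / 5 := by
      rw [div_le_iff₀ h1s]; nlinarith
    linarith
  have hE0 : 0 ≤ (1 + s) / (1 - s) + (1 + 2 * s / (1 - s) * (1 - φv / (1 - s))) := by
    linarith
  calc h * ((1 + s) / (1 - s) + (1 + 2 * s / (1 - s) * (1 - φv / (1 - s))))
      ≤ 0.7 * (14 / 5) := mul_le_mul hh1 hE hE0 (by norm_num)
    _ ≤ 2 := by norm_num
end

section
/- Let 0 < α < 1, φv ≥ 0 and h > 0 be real numbers, set m = 1 + (2α²/(1−α²))·(1 − φv/(1−α²)), and assume h·((1+α²)/(1−α²) + m) ≤ 2. Let M be a real symmetric D×D matrix satisfying −(1/(1−α²))·I_D ≼ M ≼ −(1/(1−α²))·(1 − α²φv/(1−α²))·I_D. Then the operator norm of (1+h)·I_D + 2h·M satisfies ‖(1+h)·I_D + 2h·M‖ ≤ 1 − m·h. -/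
open scoped RealInnerProductSpace

lemma opNorm_le_of_quadratic_form {E : Type*} [NormedAddCommGroup E]
    [InnerProductSpace ℝ E] (T : E →L[ℝ] E)
    (hTsym : ∀ x y : E, ⟪T x, y⟫ = ⟪x, T y⟫) (C : ℝ) (hC : 0 ≤ C)
    (hq : ∀ v : E, |⟪v, T v⟫| ≤ C * ‖v‖ ^ 2) : ‖T‖ ≤ C := by
  apply T.opNorm_le_bound hC
  intro x
  by_cases hTx : T x = 0
  · simp [hTx]
    positivity
  have key : ∀ y : E, ⟪T x, y⟫ ≤ C / 2 * (‖x‖ ^ 2 + ‖y‖ ^ 2) := by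
    intro y
    have e1 : ⟪x + y, T (x + y)⟫ - ⟪x - y, T (x - y)⟫ = 4 * ⟪T x, y⟫ := by
      have h1 := hTsym x y
      simp only [map_add, map_sub, inner_add_left, inner_add_right,
        inner_sub_left, inner_sub_right]
      rw [real_inner_comm y (T x)] at h1 ⊢
      linarith [h1]
    have h2 : ⟪x + y, T (x + y)⟫ ≤ C * ‖x + y‖ ^ 2 := (abs_le.1 (hq _)).2
    have h3 : -(C * ‖x - y‖ ^ 2) ≤ ⟪x - y, T (x - y)⟫ := (abs_le.1 (hq _)).1
    have h4 : ‖x + y‖ ^ 2 + ‖x - y‖ ^ 2 = 2 * ‖x‖ ^ 2 + 2 * ‖y‖ ^ 2 := by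
      have := parallelogram_law_with_norm ℝ x y
      nlinarith [this]
    nlinarith
  have hx0 : x ≠ 0 := by rintro rfl; simp at hTx
  have hxn : 0 < ‖x‖ := norm_pos_iff.2 hx0
  have hTxn : 0 < ‖T x‖ := norm_pos_iff.2 hTx
  have := key ((‖x‖ / ‖T x‖) • T x)
  rw [real_inner_smul_right, real_inner_self_eq_norm_sq, norm_smul] at this
  have hsc : ‖(‖x‖ / ‖T x‖ : ℝ)‖ = ‖x‖ / ‖T x‖ := by
    rw [Real.norm_eq_abs, abs_of_nonneg (by positivity)]
  rw [hsc] at this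
  have h5 : ‖x‖ / ‖T x‖ * ‖T x‖ ^ 2 = ‖x‖ * ‖T x‖ := by field_simp
  have h6 : (‖x‖ / ‖T x‖ * ‖T x‖) ^ 2 = ‖x‖ ^ 2 := by field_simp
  rw [h5, h6] at this
  nlinarith

/-- Contraction lemma: if `M` is a symmetric operator on `ℝ^D` with
`−(1/(1−α²)) I ≼ M ≼ −(1/(1−α²))(1 − α²φv/(1−α²)) I`, and
`m = 1 + (2α²/(1−α²))(1 − φv/(1−α²))` with `h((1+α²)/(1−α²) + m) ≤ 2`, then
`‖(1+h) I + 2h M‖ ≤ 1 − m h` in operator norm. -/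
theorem opNorm_one_add_two_smul_le {D : ℕ} (α φv h : ℝ)
    (hα0 : 0 < α) (hα1 : α < 1) (hφ : 0 ≤ φv) (hh : 0 < h)
    (m : ℝ) (hm : m = 1 + (2 * α ^ 2 / (1 - α ^ 2)) * (1 - φv / (1 - α ^ 2)))
    (hcond : h * ((1 + α ^ 2) / (1 - α ^ 2) + m) ≤ 2)
    (M : EuclideanSpace ℝ (Fin D) →L[ℝ] EuclideanSpace ℝ (Fin D))
    (hsym : IsSelfAdjoint M)
    (hlb : ∀ v : EuclideanSpace ℝ (Fin D), -(1 / (1 - α ^ 2)) * ‖v‖ ^ 2 ≤ ⟪v, M v⟫)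
    (hub : ∀ v : EuclideanSpace ℝ (Fin D),
      ⟪v, M v⟫ ≤ -(1 / (1 - α ^ 2)) * (1 - α ^ 2 * φv / (1 - α ^ 2)) * ‖v‖ ^ 2) :
    ‖(1 + h) • (ContinuousLinearMap.id ℝ (EuclideanSpace ℝ (Fin D))) + (2 * h) • M‖ ≤
      1 - m * h := by
  have hβ : 0 < 1 - α ^ 2 := by nlinarith
  have key1 : (1 + h) + 2 * h * (-(1 / (1 - α ^ 2)) * (1 - α ^ 2 * φv / (1 - α ^ 2)))
      = 1 - m * h := by
    rw [hm]; field_simp; ring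
  have key2 : -(1 - m * h) ≤ (1 + h) + 2 * h * (-(1 / (1 - α ^ 2))) := by
    have e : (1 : ℝ) + h + 2 * h * (-(1 / (1 - α ^ 2)))
        = 1 - h * ((1 + α ^ 2) / (1 - α ^ 2)) := by
      field_simp; ring
    rw [e]
    nlinarith [hcond]
  have key3 : -(1 / (1 - α ^ 2)) ≤ -(1 / (1 - α ^ 2)) * (1 - α ^ 2 * φv / (1 - α ^ 2)) := by
    have e : -(1 / (1 - α ^ 2)) * (1 - α ^ 2 * φv / (1 - α ^ 2)) - (-(1 / (1 - α ^ 2)))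
        = α ^ 2 * φv / (1 - α ^ 2) ^ 2 := by
      field_simp; ring
    nlinarith [e, div_nonneg (mul_nonneg (sq_nonneg α) hφ) (sq_nonneg (1 - α ^ 2))]
  have hC : 0 ≤ 1 - m * h := by nlinarith [key1, key2, key3]
  refine opNorm_le_of_quadratic_form _ ?_ _ hC ?_
  · intro x y
    have hMsym := hsym.isSymmetric
    simp only [ContinuousLinearMap.add_apply, ContinuousLinearMap.coe_smul',
      Pi.smul_apply, ContinuousLinearMap.id_apply, inner_add_left, inner_add_right,
      real_inner_smul_left, real_inner_smul_right]
    have e2 := hMsym x y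
    simp only [ContinuousLinearMap.coe_coe] at e2
    rw [e2]
  · intro v
    have hval : ⟪v, ((1 + h) • (ContinuousLinearMap.id ℝ (EuclideanSpace ℝ (Fin D))) +
        (2 * h) • M) v⟫ = (1 + h) * ‖v‖ ^ 2 + 2 * h * ⟪v, M v⟫ := by
      simp only [ContinuousLinearMap.add_apply, ContinuousLinearMap.coe_smul',
        Pi.smul_apply, ContinuousLinearMap.id_apply, inner_add_right,
        real_inner_smul_right, real_inner_self_eq_norm_sq]
      try ring
    rw [hval, abs_le]
    have hs : (0 : ℝ) ≤ ‖v‖ ^ 2 := sq_nonneg _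
    have h1 := hub v
    have h2 := hlb v
    constructor
    · nlinarith [key2, mul_le_mul_of_nonneg_left h2 (by positivity : (0:ℝ) ≤ 2 * h),
        mul_le_mul_of_nonneg_right key2 hs]
    · nlinarith [key1, mul_le_mul_of_nonneg_left h1 (by positivity : (0:ℝ) ≤ 2 * h),
        mul_le_mul_of_nonneg_right (le_of_eq key1) hs]
end
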